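/- arXiv:1210.7524 — 2 statements merged into one kernel-verified Lean document; each statement's English description precedes it below -/
import Mathlib

section
/- Assume 0 ≤ p, q ≤ 1 with (p,q) ≠ (0,0) and s = 1/(p+q). Then the function (A,B) ↦ λ_min((A^{p/2} B^q A^{p/2})^s), defined on pairs of positive definite n×n matrices, is jointly concave, where λ_min denotes the smallest eigenvalue. -/
open Matrix
open scoped ComplexOrder

/-- Real power of a Hermitian matrix via the spectral theorem (junk value `0` on
non-Hermitian input). -/
noncomputable def mpow {n : Type*} [Fintype n] [DecidableEq n] (A : Matrix n n ℂ) (p : ℝ) :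
    Matrix n n ℂ :=
  if hA : A.IsHermitian then
    (hA.eigenvectorUnitary : Matrix n n ℂ) *
      Matrix.diagonal (fun i => ((hA.eigenvalues i ^ p : ℝ) : ℂ)) *
      star (hA.eigenvectorUnitary : Matrix n n ℂ)
  else 0

/-- Loewner order: `loewner A B` iff `B - A` is positive semidefinite. -/
def loewner {n : Type*} [Fintype n] (A B : Matrix n n ℂ) : Prop := (B - A).PosSemidef

/-- Smallest eigenvalue of a Hermitian matrix (junk value `0` on non-Hermitian input). -/
noncomputable def lambdaMin {n : Type*} [Fintype n] [DecidableEq n] (A : Matrix n n ℂ) : ℝ :=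
  if hA : A.IsHermitian then ⨅ i, hA.eigenvalues i else 0

/-- Largest eigenvalue of a Hermitian matrix; for positive definite `A` this is the
operator norm `‖A‖∞` (junk value `0` on non-Hermitian input). -/
noncomputable def lambdaMax {n : Type*} [Fintype n] [DecidableEq n] (A : Matrix n n ℂ) : ℝ :=
  if hA : A.IsHermitian then ⨆ i, hA.eigenvalues i else 0

/-- The `j`-th smallest eigenvalue (counted with multiplicity, increasing order)
of a Hermitian matrix. -/
noncomputable def eigUp {k : ℕ} (A : Matrix (Fin k) (Fin k) ℂ) (j : Fin k) : ℝ :=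
  if hA : A.IsHermitian then (hA.eigenvalues ∘ Tuple.sort hA.eigenvalues) j else 0

/-- The `j`-th largest eigenvalue of a Hermitian matrix. -/
noncomputable def eigDown {k : ℕ} (A : Matrix (Fin k) (Fin k) ℂ) (j : Fin k) : ℝ :=
  eigUp A j.rev

set_option autoImplicit false
set_option linter.unusedSectionVars false
set_option linter.unusedVariables false
set_option linter.unusedTactic false

namespace Aux
set_option linter.unusedSectionVars false
variable {n : Type*} [Fintype n] [DecidableEq n]

lemma contOn (f : ℝ → ℝ) (A : Matrix n n ℂ) : ContinuousOn f (spectrum ℝ A) := by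
  rw [continuousOn_iff_continuous_restrict]
  have : Finite (spectrum ℝ A) := A.finite_real_spectrum
  have : DiscreteTopology (spectrum ℝ A) := Finite.instDiscreteTopology
  exact continuous_of_discreteTopology

lemma mpow_eq {A : Matrix n n ℂ} (hA : A.IsHermitian) (p : ℝ) :
    mpow A p = hA.cfc (fun x => x ^ p) := by
  rw [mpow, dif_pos hA]
  rfl

lemma mpow_eq_cfc {A : Matrix n n ℂ} (hA : A.IsHermitian) (p : ℝ) :
    mpow A p = cfc (fun x : ℝ => x ^ p) A := by
  rw [mpow_eq hA, hA.cfc_eq]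

/-- quadratic form -/
noncomputable def qf (v : n → ℂ) (X : Matrix n n ℂ) : ℂ := dotProduct (star v) (X *ᵥ v)

lemma qf_sub (v : n → ℂ) (X Y : Matrix n n ℂ) : qf v (X - Y) = qf v X - qf v Y := by
  simp [qf, Matrix.sub_mulVec, dotProduct_sub]

lemma qf_add (v : n → ℂ) (X Y : Matrix n n ℂ) : qf v (X + Y) = qf v X + qf v Y := by
  simp [qf, Matrix.add_mulVec, dotProduct_add]

lemma qf_smul (v : n → ℂ) (c : ℝ) (X : Matrix n n ℂ) : qf v (c • X) = c • qf v X := by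
  simp [qf, Matrix.smul_mulVec, dotProduct_smul]

lemma psd_iff_qf (X : Matrix n n ℂ) : X.PosSemidef ↔ X.IsHermitian ∧ ∀ v, 0 ≤ qf v X :=
  Matrix.posSemidef_iff_dotProduct_mulVec

/-- the quadratic form of `U * diagonal d * star U` -/
lemma qf_unitary_diag (U : Matrix n n ℂ)
    (d : n → ℝ) (v : n → ℂ) :
    qf v (U * Matrix.diagonal (fun i => (d i : ℂ)) * star U) =
      ((∑ i, d i * Complex.normSq ((star U *ᵥ v) i) : ℝ) : ℂ) := by
  set w := star U *ᵥ v with hw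
  have h1 : (U * Matrix.diagonal (fun i => (d i : ℂ)) * star U) *ᵥ v
      = U *ᵥ (Matrix.diagonal (fun i => (d i : ℂ)) *ᵥ w) := by
    rw [hw, ← Matrix.mulVec_mulVec, ← Matrix.mulVec_mulVec]
  have h2 : star v ⬝ᵥ (U *ᵥ (Matrix.diagonal (fun i => (d i : ℂ)) *ᵥ w))
      = star w ⬝ᵥ (Matrix.diagonal (fun i => (d i : ℂ)) *ᵥ w) := by
    rw [hw, dotProduct_mulVec, star_mulVec, star_eq_conjTranspose, conjTranspose_conjTranspose]
  rw [qf, h1, h2]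
  push_cast
  rw [dotProduct, Finset.sum_congr rfl]
  intro i _
  simp only [mulVec_diagonal, Pi.star_apply, Complex.star_def]
  rw [Complex.normSq_eq_conj_mul_self]
  push_cast
  ring

variable {A : Matrix n n ℂ}

lemma contOn' (f : ℝ → ℝ) {s : Set ℝ} (hs : s.Finite) : ContinuousOn f s := by
  rw [continuousOn_iff_continuous_restrict]
  have : Finite s := hs
  have : DiscreteTopology s := Finite.instDiscreteTopology
  exact continuous_of_discreteTopology

lemma qf_cfc (hA : A.IsHermitian) (f : ℝ → ℝ) (v : n → ℂ) :
    qf v (hA.cfc f) = ((∑ i, f (hA.eigenvalues i) *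
      Complex.normSq ((star (hA.eigenvectorUnitary : Matrix n n ℂ) *ᵥ v) i) : ℝ) : ℂ) :=
  qf_unitary_diag (hA.eigenvectorUnitary : Matrix n n ℂ) (f ∘ hA.eigenvalues) v

lemma cfc_herm (hA : A.IsHermitian) (f : ℝ → ℝ) : (hA.cfc f).IsHermitian := by
  rw [← hA.cfc_eq]
  exact (cfc_predicate f A : IsSelfAdjoint _)

lemma psd_cfc (hA : A.IsHermitian) {f : ℝ → ℝ} (h : ∀ i, 0 ≤ f (hA.eigenvalues i)) :
    (hA.cfc f).PosSemidef := by
  refine Matrix.PosSemidef.of_dotProduct_mulVec_nonneg (cfc_herm hA f) fun v => ?_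
  show 0 ≤ qf v _
  rw [qf_cfc hA f v]
  rw [Complex.zero_le_real]
  exact Finset.sum_nonneg fun i _ => mul_nonneg (h i) (Complex.normSq_nonneg _)

lemma single_of_unitary (hA : A.IsHermitian) (i : n) :
    star (hA.eigenvectorUnitary : Matrix n n ℂ) *ᵥ
      ((hA.eigenvectorUnitary : Matrix n n ℂ) *ᵥ Pi.single i 1) = Pi.single i 1 := by
  rw [mulVec_mulVec, Unitary.star_mul_self_of_mem (SetLike.coe_mem _), one_mulVec]

lemma mulVec_single_ne (hA : A.IsHermitian) (i : n) :
    (hA.eigenvectorUnitary : Matrix n n ℂ) *ᵥ Pi.single i 1 ≠ 0 := by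
  intro h
  have h2 := congrArg (fun w => star (hA.eigenvectorUnitary : Matrix n n ℂ) *ᵥ w) h
  simp only [mulVec_zero] at h2
  rw [single_of_unitary hA i] at h2
  have h3 := congrFun h2 i
  simp [Pi.single_apply] at h3


lemma qf_cfc_single (hA : A.IsHermitian) (f : ℝ → ℝ) (i : n) :
    qf ((hA.eigenvectorUnitary : Matrix n n ℂ) *ᵥ Pi.single i 1) (hA.cfc f)
      = ((f (hA.eigenvalues i) : ℝ) : ℂ) := by
  rw [qf_cfc, single_of_unitary]
  norm_cast
  rw [Finset.sum_eq_single i]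
  · simp
  · intro j _ hj
    simp [Pi.single_apply, hj]
  · simp

lemma nonneg_of_psd_cfc (hA : A.IsHermitian) {f : ℝ → ℝ} (h : (hA.cfc f).PosSemidef) (i : n) :
    0 ≤ f (hA.eigenvalues i) := by
  have h2 := h.dotProduct_mulVec_nonneg ((hA.eigenvectorUnitary : Matrix n n ℂ) *ᵥ Pi.single i 1)
  rw [show dotProduct _ _ = qf ((hA.eigenvectorUnitary : Matrix n n ℂ) *ᵥ Pi.single i 1)
    (hA.cfc f) from rfl, qf_cfc_single hA f i, Complex.zero_le_real] at h2
  exact h2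

lemma posdef_cfc (hA : A.IsHermitian) {f : ℝ → ℝ} (h : ∀ i, 0 < f (hA.eigenvalues i)) :
    (hA.cfc f).PosDef := by
  refine Matrix.PosDef.of_dotProduct_mulVec_pos (cfc_herm hA f) fun v hv => ?_
  show (0 : ℂ) < qf v _
  rw [qf_cfc hA f v, Complex.zero_lt_real]
  have hw : star (hA.eigenvectorUnitary : Matrix n n ℂ) *ᵥ v ≠ 0 := by
    intro hw0
    apply hv
    have : ((hA.eigenvectorUnitary : Matrix n n ℂ) * star (hA.eigenvectorUnitary : Matrix n n ℂ))
        *ᵥ v = v := by rw [Unitary.mul_star_self_of_mem (SetLike.coe_mem _), one_mulVec]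
    rw [← this, ← mulVec_mulVec, hw0, mulVec_zero]
  obtain ⟨i, hi⟩ := Function.ne_iff.mp hw
  refine Finset.sum_pos' (fun j _ => mul_nonneg (h j).le (Complex.normSq_nonneg _)) ⟨i,
    Finset.mem_univ i, mul_pos (h i) ?_⟩
  simpa [Complex.normSq_pos] using hi

lemma cfc_sub_const (hA : A.IsHermitian) (t : ℝ) :
    hA.cfc (fun x => x - t) = A - t • 1 := by
  rw [← hA.cfc_eq, cfc_sub _ _ A (contOn _ A) (contOn _ A),
    cfc_id' ℝ A hA.isSelfAdjoint, cfc_const t A hA.isSelfAdjoint,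
    Algebra.algebraMap_eq_smul_one]

lemma cfc_const_smul_one (hA : A.IsHermitian) (t : ℝ) :
    hA.cfc (fun _ => t) = t • 1 := by
  rw [← hA.cfc_eq, cfc_const t A hA.isSelfAdjoint, Algebra.algebraMap_eq_smul_one]

lemma psd_sub_smul_iff (hA : A.IsHermitian) (t : ℝ) :
    (A - t • 1).PosSemidef ↔ ∀ i, t ≤ hA.eigenvalues i := by
  constructor
  · intro h i
    have := nonneg_of_psd_cfc hA (f := fun x => x - t) (by rwa [cfc_sub_const]) i
    linarith
  · intro h
    have := psd_cfc hA (f := fun x => x - t) (fun i => by show (0:ℝ) ≤ hA.eigenvalues i - t; linarith [h i])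
    rwa [cfc_sub_const] at this

section Nonempty
variable [Nonempty n]

lemma lambdaMin_le (hA : A.IsHermitian) (i : n) : lambdaMin A ≤ hA.eigenvalues i := by
  rw [lambdaMin, dif_pos hA]
  exact ciInf_le (Finite.bddBelow_range _) i

lemma le_lambdaMin (hA : A.IsHermitian) {t : ℝ} (h : ∀ i, t ≤ hA.eigenvalues i) :
    t ≤ lambdaMin A := by
  rw [lambdaMin, dif_pos hA]
  exact le_ciInf h

lemma lambdaMin_mem (hA : A.IsHermitian) : ∃ i, lambdaMin A = hA.eigenvalues i := by
  obtain ⟨i, hi⟩ := Finite.exists_min hA.eigenvalues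
  exact ⟨i, le_antisymm (lambdaMin_le hA i) (le_lambdaMin hA hi)⟩

lemma psd_sub_smul_iff_lambdaMin (hA : A.IsHermitian) (t : ℝ) :
    (A - t • 1).PosSemidef ↔ t ≤ lambdaMin A := by
  rw [psd_sub_smul_iff hA]
  exact ⟨fun h => le_lambdaMin hA h, fun h i => le_trans h (lambdaMin_le hA i)⟩

lemma lambdaMin_pos (hA : A.PosDef) : 0 < lambdaMin A := by
  obtain ⟨i, hi⟩ := lambdaMin_mem hA.1
  rw [hi]
  exact hA.eigenvalues_pos i

end Nonempty

lemma spec_pos (hA : A.PosDef) : ∀ x ∈ spectrum ℝ A, 0 < x := by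
  rw [hA.1.spectrum_real_eq_range_eigenvalues]
  rintro x ⟨i, rfl⟩
  exact hA.eigenvalues_pos i

lemma mpow_herm (hA : A.IsHermitian) (r : ℝ) : (mpow A r).IsHermitian :=
  mpow_eq hA r ▸ cfc_herm hA _

lemma mpow_posDef (hA : A.PosDef) (r : ℝ) : (mpow A r).PosDef := by
  rw [mpow_eq hA.1]
  exact posdef_cfc hA.1 fun i => Real.rpow_pos_of_pos (hA.eigenvalues_pos i) r

lemma mpow_mul (hA : A.PosDef) (a b : ℝ) : mpow A a * mpow A b = mpow A (a + b) := by
  rw [mpow_eq_cfc hA.1, mpow_eq_cfc hA.1, mpow_eq_cfc hA.1,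
    ← cfc_mul _ _ A (contOn _ A) (contOn _ A)]
  exact cfc_congr fun x hx => (Real.rpow_add (spec_pos hA x hx) a b).symm

lemma mpow_zero (hA : A.IsHermitian) : mpow A 0 = 1 := by
  rw [mpow_eq_cfc hA,
    show (fun x : ℝ => x ^ (0:ℝ)) = fun _ => (1:ℝ) from funext fun x => Real.rpow_zero x,
    cfc_const 1 A hA.isSelfAdjoint, _root_.map_one]

lemma mpow_one (hA : A.IsHermitian) : mpow A 1 = A := by
  rw [mpow_eq_cfc hA, show (fun x : ℝ => x ^ (1:ℝ)) = fun x => x from funext fun x =>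
    Real.rpow_one x, cfc_id' ℝ A hA.isSelfAdjoint]

lemma mpow_mpow (hA : A.PosDef) (a b : ℝ) : mpow (mpow A a) b = mpow A (a * b) := by
  rw [mpow_eq_cfc (mpow_herm hA.1 a), mpow_eq_cfc hA.1 a,
    ← cfc_comp (fun x : ℝ => x ^ b) (fun x : ℝ => x ^ a) A hA.1.isSelfAdjoint
      (contOn' _ ((Matrix.finite_real_spectrum (A := A)).image _)) (contOn _ A),
    mpow_eq_cfc hA.1]
  exact cfc_congr fun x hx => by
    simp only [Function.comp_apply]
    rw [← Real.rpow_mul (spec_pos hA x hx).le]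

lemma posDef_smul (hA : A.PosDef) {c : ℝ} (hc : 0 < c) : (c • A).PosDef := by
  refine Matrix.PosDef.of_dotProduct_mulVec_pos ?_ fun v hv => ?_
  · show (c • A)ᴴ = c • A
    rw [conjTranspose_smul, star_trivial, hA.1.eq]
  · show (0:ℂ) < star v ⬝ᵥ (c • A) *ᵥ v
    rw [Matrix.smul_mulVec, dotProduct_smul]
    have h1 := hA.dotProduct_mulVec_pos hv
    have : (c • (star v ⬝ᵥ A *ᵥ v) : ℂ) = (c:ℂ) * (star v ⬝ᵥ A *ᵥ v) := by
      simp [Complex.real_smul]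
    rw [this]
    exact mul_pos (by exact_mod_cast hc) h1

lemma psd_smul {X : Matrix n n ℂ} (hX : X.PosSemidef) {c : ℝ} (hc : 0 ≤ c) :
    (c • X).PosSemidef := by
  refine Matrix.PosSemidef.of_dotProduct_mulVec_nonneg ?_ fun v => ?_
  · show (c • X)ᴴ = c • X
    rw [conjTranspose_smul, star_trivial, hX.1.eq]
  · show (0:ℂ) ≤ star v ⬝ᵥ (c • X) *ᵥ v
    rw [Matrix.smul_mulVec, dotProduct_smul]
    have : (c • (star v ⬝ᵥ X *ᵥ v) : ℂ) = (c:ℂ) * (star v ⬝ᵥ X *ᵥ v) := by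
      simp [Complex.real_smul]
    rw [this]
    exact mul_nonneg (by exact_mod_cast hc) (hX.dotProduct_mulVec_nonneg v)

lemma lw_trans {X Y Z : Matrix n n ℂ} (h1 : (Y - X).PosSemidef) (h2 : (Z - Y).PosSemidef) :
    (Z - X).PosSemidef := by
  have := h2.add h1
  rwa [sub_add_sub_cancel] at this

lemma lw_conj {X Y : Matrix n n ℂ} (h : (Y - X).PosSemidef) (M : Matrix n n ℂ) :
    (Mᴴ * Y * M - Mᴴ * X * M).PosSemidef := by
  have := h.conjTranspose_mul_mul_same M
  rwa [Matrix.mul_sub, Matrix.sub_mul] at this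

lemma lw_add {X Y Z W : Matrix n n ℂ} (h1 : (Y - X).PosSemidef) (h2 : (W - Z).PosSemidef) :
    ((Y + W) - (X + Z)).PosSemidef := by
  have := h1.add h2
  rwa [sub_add_sub_comm] at this

lemma lw_smul {X Y : Matrix n n ℂ} (h : (Y - X).PosSemidef) {c : ℝ} (hc : 0 ≤ c) :
    (c • Y - c • X).PosSemidef := by
  have := psd_smul h hc
  rwa [smul_sub] at this

lemma mul_cancel_left {M N X : Matrix n n ℂ} (h : M * N = 1) : M * (N * X) = X := by
  rw [← Matrix.mul_assoc, h, one_mul]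

lemma eq_of_mul_eq_one' {S T K : Matrix n n ℂ} (hSK : S * K = 1) (hKT : K * T = 1) : S = T := by
  have : S * (K * T) = T := by rw [← Matrix.mul_assoc, hSK, one_mul]
  rwa [hKT, mul_one] at this

lemma cfc_sub' (hA : A.IsHermitian) (f g : ℝ → ℝ) :
    hA.cfc (fun x => f x - g x) = hA.cfc f - hA.cfc g := by
  rw [← hA.cfc_eq, ← hA.cfc_eq, ← hA.cfc_eq, cfc_sub _ _ A (contOn _ A) (contOn _ A)]

lemma cfc_affine (hA : A.IsHermitian) (f : ℝ → ℝ) (c d : ℝ) :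
    hA.cfc (fun x => c + d * f x) = c • 1 + d • hA.cfc f := by
  rw [← hA.cfc_eq, ← hA.cfc_eq]
  have h1 : cfc (fun x : ℝ => c + d * f x) A
      = cfc (fun _ : ℝ => c) A + cfc (fun x : ℝ => d * f x) A := by
    rw [← cfc_add A _ _ (contOn _ A) (contOn _ A)]
  have h2 : cfc (fun x : ℝ => d * f x) A = d • cfc f A := by
    rw [← cfc_smul (R := ℝ) d f A (contOn _ A)]
    rfl
  rw [h1, h2, cfc_const c A hA.isSelfAdjoint, Algebra.algebraMap_eq_smul_one]

lemma scalar_inv_convex {a b x : ℝ} (ha : 0 < a) (hb : 0 < b) (hab : a + b = 1) (hx : 0 < x) :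
    0 ≤ a + b * x ^ (-1:ℝ) - (a + b * x) ^ (-1:ℝ) := by
  rw [Real.rpow_neg_one, Real.rpow_neg_one]
  have h1 : 0 < a + b * x := by positivity
  have h2 : x * x⁻¹ = 1 := mul_inv_cancel₀ hx.ne'
  have h3 : (a + b * x) * (a + b * x)⁻¹ = 1 := mul_inv_cancel₀ h1.ne'
  have e : x⁻¹ * (x - 1)^2 = x - 2 + x⁻¹ := by field_simp; ring
  have key : (a + b * x⁻¹) * (a + b * x) = a^2 + b^2 + a*b*(x + x⁻¹) := by
    linear_combination (b^2) * h2
  have keyge : 1 ≤ (a + b * x⁻¹) * (a + b * x) := by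
    rw [key]
    nlinarith [mul_nonneg (inv_nonneg.mpr hx.le) (sq_nonneg (x - 1)), mul_pos ha hb]
  nlinarith [keyge, h3, h1]

variable {P Q : Matrix n n ℂ}

/-- inverse of a positive matrix, as `mpow _ (-1)`, is the two-sided inverse -/
lemma mpow_neg_one_mul (hP : P.PosDef) : mpow P (-1) * P = 1 := by
  nth_rewrite 2 [← mpow_one hP.1]
  rw [mpow_mul hP]
  norm_num [mpow_zero hP.1]

lemma mul_mpow_neg_one (hP : P.PosDef) : P * mpow P (-1) = 1 := by
  nth_rewrite 1 [← mpow_one hP.1]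
  rw [mpow_mul hP]
  norm_num [mpow_zero hP.1]

lemma posDef_conj (hG : Q.PosDef) {M N : Matrix n n ℂ} (hNM : N * M = 1) :
    (Mᴴ * Q * M).PosDef := by
  refine Matrix.PosDef.of_dotProduct_mulVec_pos ?_ fun v hv => ?_
  · show (Mᴴ * Q * M)ᴴ = Mᴴ * Q * M
    rw [conjTranspose_mul, conjTranspose_mul, conjTranspose_conjTranspose, hG.1.eq,
      Matrix.mul_assoc]
  · show (0:ℂ) < star v ⬝ᵥ (Mᴴ * Q * M) *ᵥ v
    have h1 : (Mᴴ * Q * M) *ᵥ v = Mᴴ *ᵥ (Q *ᵥ (M *ᵥ v)) := by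
      rw [mulVec_mulVec, mulVec_mulVec]
    have h2 : star v ⬝ᵥ (Mᴴ *ᵥ (Q *ᵥ (M *ᵥ v))) = star (M *ᵥ v) ⬝ᵥ (Q *ᵥ (M *ᵥ v)) := by
      rw [star_mulVec, dotProduct_mulVec]
    rw [h1, h2]
    refine hG.dotProduct_mulVec_pos fun h0 => hv ?_
    have : N *ᵥ (M *ᵥ v) = v := by rw [mulVec_mulVec, hNM, one_mulVec]
    rw [← this, h0, mulVec_zero]

set_option maxHeartbeats 1000000 in
/-- Operator convexity of the matrix inverse. -/
lemma inv_convex (hP : P.PosDef) (hQ : Q.PosDef) {a b : ℝ}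
    (ha : 0 < a) (hb : 0 < b) (hab : a + b = 1) :
    (a • mpow P (-1) + b • mpow Q (-1) - mpow (a • P + b • Q) (-1)).PosSemidef := by
  have hR : (a • P + b • Q).PosDef := (posDef_smul hP ha).add (posDef_smul hQ hb)
  set R := a • P + b • Q with hRdef
  set M := mpow P (-(1/2) : ℝ) with hMdef
  set N := mpow P ((1/2) : ℝ) with hNdef
  have hMN : M * N = 1 := by rw [hMdef, hNdef, mpow_mul hP]; norm_num [mpow_zero hP.1]
  have hNM : N * M = 1 := by rw [hMdef, hNdef, mpow_mul hP]; norm_num [mpow_zero hP.1]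
  have hMH : Mᴴ = M := (mpow_herm hP.1 _).eq
  have hNN : N * N = P := by
    rw [hNdef, mpow_mul hP]; norm_num [mpow_one hP.1]
  have hMM : M * M = mpow P (-1) := by
    rw [hMdef, mpow_mul hP]; norm_num
  have hC : (M * Q * M).PosDef := by
    have := posDef_conj hQ (M := M) hNM
    rwa [hMH] at this
  set C := M * Q * M with hCdef
  -- C⁻¹ = N * Q⁻¹ * N
  have hCinv : mpow C (-1) = N * mpow Q (-1) * N := by
    refine eq_of_mul_eq_one' (mpow_neg_one_mul hC) ?_
    calc (M * Q * M) * (N * mpow Q (-1) * N)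
        = M * (Q * (M * (N * (mpow Q (-1) * N)))) := by simp only [Matrix.mul_assoc]
      _ = M * (Q * (mpow Q (-1) * N)) := by rw [mul_cancel_left hMN]
      _ = M * ((Q * mpow Q (-1)) * N) := by simp only [Matrix.mul_assoc]
      _ = M * N := by rw [mul_mpow_neg_one hQ, one_mul]
      _ = 1 := hMN
  -- a•1 + b•C = M * R * M
  have hMPM : M * P * M = 1 := by
    rw [← hNN]
    calc M * (N * N) * M = (M * N) * (N * M) := by simp only [Matrix.mul_assoc]
      _ = 1 := by rw [hMN, hNM, one_mul]
  have hComb : a • (1 : Matrix n n ℂ) + b • C = M * R * M := by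
    rw [hRdef, Matrix.mul_add, Matrix.add_mul, Matrix.mul_smul, Matrix.smul_mul,
      Matrix.mul_smul, Matrix.smul_mul, hMPM]
  have hComb' : (a • (1 : Matrix n n ℂ) + b • C).PosDef := by
    have h := posDef_conj hR (M := M) hNM
    rw [hMH] at h
    rwa [hComb]
  -- (a•1 + b•C)⁻¹ = N * R⁻¹ * N
  have hCombInv : mpow (a • (1 : Matrix n n ℂ) + b • C) (-1) = N * mpow R (-1) * N := by
    refine eq_of_mul_eq_one' (mpow_neg_one_mul hComb') ?_
    rw [hComb]
    calc (M * R * M) * (N * mpow R (-1) * N)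
        = M * (R * (M * (N * (mpow R (-1) * N)))) := by simp only [Matrix.mul_assoc]
      _ = M * (R * (mpow R (-1) * N)) := by rw [mul_cancel_left hMN]
      _ = M * ((R * mpow R (-1)) * N) := by simp only [Matrix.mul_assoc]
      _ = M * N := by rw [mul_mpow_neg_one hR, one_mul]
      _ = 1 := hMN
  -- key spectral inequality for C
  have hW : (a • (1 : Matrix n n ℂ) + b • mpow C (-1)
      - mpow (a • (1 : Matrix n n ℂ) + b • C) (-1)).PosSemidef := by
    have e1 : hC.1.cfc (fun x => a + b * x ^ (-1:ℝ)) = a • 1 + b • mpow C (-1) := by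
      rw [cfc_affine hC.1 _ a b, mpow_eq hC.1]
    have e2 : hC.1.cfc (fun x => (a + b * x) ^ (-1:ℝ))
        = mpow (a • (1 : Matrix n n ℂ) + b • C) (-1) := by
      have e3 : cfc (fun x : ℝ => a + b * x) C = a • 1 + b • C := by
        rw [hC.1.cfc_eq, cfc_affine hC.1 (fun x => x) a b, ← hC.1.cfc_eq,
          cfc_id' ℝ C hC.1.isSelfAdjoint]
      rw [mpow_eq_cfc hComb'.1, ← e3,
        ← cfc_comp (fun x : ℝ => x ^ (-1:ℝ)) (fun x : ℝ => a + b * x) C hC.1.isSelfAdjoint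
          (contOn' _ ((Matrix.finite_real_spectrum (A := C)).image _)) (contOn _ C),
        hC.1.cfc_eq]
      rfl
    have := psd_cfc hC.1 (f := fun x => (a + b * x ^ (-1:ℝ)) - (a + b * x) ^ (-1:ℝ))
      (fun i => scalar_inv_convex ha hb hab (hC.eigenvalues_pos i))
    rwa [cfc_sub' hC.1, e1, e2] at this
  -- conjugate hW by M
  have hconj := lw_conj hW M
  rw [hMH] at hconj
  -- simplify both sides
  have s1 : M * (a • (1:Matrix n n ℂ) + b • mpow C (-1)) * M
      = a • mpow P (-1) + b • mpow Q (-1) := by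
    rw [hCinv, Matrix.mul_add, Matrix.add_mul, Matrix.mul_smul, Matrix.mul_smul,
      Matrix.smul_mul, Matrix.smul_mul, mul_one, hMM]
    congr 2
    calc M * (N * mpow Q (-1) * N) * M = (M * N) * mpow Q (-1) * (N * M) := by
          simp only [Matrix.mul_assoc]
      _ = mpow Q (-1) := by rw [hMN, hNM, one_mul, mul_one]
  have s2 : M * mpow (a • (1 : Matrix n n ℂ) + b • C) (-1) * M = mpow R (-1) := by
    rw [hCombInv]
    calc M * (N * mpow R (-1) * N) * M = (M * N) * mpow R (-1) * (N * M) := by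
          simp only [Matrix.mul_assoc]
      _ = mpow R (-1) := by rw [hMN, hNM, one_mul, mul_one]
  rwa [s1, s2] at hconj

lemma inv_antitone {G H : Matrix n n ℂ} (hG : G.PosDef) (hH : H.PosDef)
    (h : (H - G).PosSemidef) : (mpow G (-1) - mpow H (-1)).PosSemidef := by
  set M := mpow H (-(1/2) : ℝ) with hMdef
  set N := mpow H ((1/2) : ℝ) with hNdef
  have hMN : M * N = 1 := by rw [hMdef, hNdef, mpow_mul hH]; norm_num [mpow_zero hH.1]
  have hNM : N * M = 1 := by rw [hMdef, hNdef, mpow_mul hH]; norm_num [mpow_zero hH.1]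
  have hMH : Mᴴ = M := (mpow_herm hH.1 _).eq
  have hNN : N * N = H := by rw [hNdef, mpow_mul hH]; norm_num [mpow_one hH.1]
  have hMM : M * M = mpow H (-1) := by rw [hMdef, mpow_mul hH]; norm_num
  have hMHM : M * H * M = 1 := by
    rw [← hNN]
    calc M * (N * N) * M = (M * N) * (N * M) := by simp only [Matrix.mul_assoc]
      _ = 1 := by rw [hMN, hNM, one_mul]
  have hK : (M * G * M).PosDef := by
    have h' := posDef_conj hG (M := M) hNM
    rwa [hMH] at h'
  set K := M * G * M with hKdef
  have hconj := lw_conj h M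
  rw [hMH, hMHM] at hconj
  -- hconj : (1 - K).PosSemidef
  have e1 : hK.1.cfc (fun x => 1 - x) = 1 - K := by
    rw [cfc_sub' hK.1 (fun _ => 1) (fun x => x), cfc_const_smul_one hK.1, one_smul,
      ← hK.1.cfc_eq, cfc_id' ℝ K hK.1.isSelfAdjoint]
  have hEig : ∀ i, 0 ≤ 1 - hK.1.eigenvalues i :=
    nonneg_of_psd_cfc hK.1 (by rwa [e1])
  have e2 : hK.1.cfc (fun x => x ^ (-1:ℝ) - 1) = mpow K (-1) - 1 := by
    rw [cfc_sub' hK.1 (fun x => x ^ (-1:ℝ)) (fun _ => 1), cfc_const_smul_one hK.1, one_smul,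
      ← mpow_eq hK.1]
  have h2 : (mpow K (-1) - 1).PosSemidef := by
    rw [← e2]
    refine psd_cfc hK.1 fun i => ?_
    have hpos := hK.eigenvalues_pos i
    have hle := hEig i
    rw [Real.rpow_neg_one]
    have hinv : hK.1.eigenvalues i * (hK.1.eigenvalues i)⁻¹ = 1 := mul_inv_cancel₀ hpos.ne'
    nlinarith [inv_nonneg.mpr hpos.le]
  have hKinv : mpow K (-1) = N * mpow G (-1) * N := by
    refine eq_of_mul_eq_one' (mpow_neg_one_mul hK) ?_
    calc (M * G * M) * (N * mpow G (-1) * N)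
        = M * (G * (M * (N * (mpow G (-1) * N)))) := by simp only [Matrix.mul_assoc]
      _ = M * (G * (mpow G (-1) * N)) := by rw [mul_cancel_left hMN]
      _ = M * ((G * mpow G (-1)) * N) := by simp only [Matrix.mul_assoc]
      _ = M * N := by rw [mul_mpow_neg_one hG, one_mul]
      _ = 1 := hMN
  have hc2 := lw_conj h2 M
  rw [hMH] at hc2
  have s1 : M * mpow K (-1) * M = mpow G (-1) := by
    rw [hKinv]
    calc M * (N * mpow G (-1) * N) * M = (M * N) * mpow G (-1) * (N * M) := by
          simp only [Matrix.mul_assoc]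
      _ = mpow G (-1) := by rw [hMN, hNM, one_mul, mul_one]
  have s2 : M * 1 * M = mpow H (-1) := by rw [Matrix.mul_one, hMM]
  rwa [s1, s2] at hc2

section Analysis
open MeasureTheory Set


lemma cont_integrand {q e : ℝ} (he : 0 < e) {s : Set ℝ} (hs : s ⊆ Set.Ioi 0) :
    ContinuousOn (fun l : ℝ => l ^ (q-1) * (e / (e + l))) s := by
  intro l hl
  have hl0 : (0:ℝ) < l := hs hl
  apply ContinuousAt.continuousWithinAt
  exact (Real.continuousAt_rpow_const l _ (Or.inl hl0.ne')).mul
    (continuousAt_const.div (continuousAt_const.add continuousAt_id) (by positivity))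

lemma integrand_integrable {q : ℝ} (hq0 : 0 < q) (hq1 : q < 1) {e : ℝ} (he : 0 < e) :
    IntegrableOn (fun l : ℝ => l ^ (q-1) * (e / (e + l))) (Set.Ioi 0) := by
  have hsplit : Set.Ioc (0:ℝ) 1 ∪ Set.Ioi 1 = Set.Ioi 0 := Set.Ioc_union_Ioi_eq_Ioi zero_le_one
  rw [← hsplit]
  apply IntegrableOn.union
  · -- on Ioc 0 1, dominated by l ^ (q-1)
    have hbase : IntegrableOn (fun l : ℝ => l ^ (q-1)) (Set.Ioc (0:ℝ) 1) := by
      rw [← intervalIntegrable_iff_integrableOn_Ioc_of_le zero_le_one]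
      exact intervalIntegral.intervalIntegrable_rpow' (by linarith)
    refine Integrable.mono' hbase
      ((cont_integrand he (by intro x hx; exact hx.1)).aestronglyMeasurable measurableSet_Ioc) ?_
    rw [ae_restrict_iff' measurableSet_Ioc]
    filter_upwards with l hl
    have hl0 := hl.1
    have h1 : 0 < e + l := by linarith
    rw [Real.norm_eq_abs, abs_of_nonneg (by positivity)]
    have : e / (e + l) ≤ 1 := by
      rw [div_le_one h1]; linarith
    nlinarith [Real.rpow_nonneg hl0.le (q-1)]
  · -- on Ioi 1, dominated by e * l ^ (q-2)
    have hbase : IntegrableOn (fun l : ℝ => e * l ^ (q-2)) (Set.Ioi (1:ℝ)) :=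
      (integrableOn_Ioi_rpow_of_lt (by linarith) one_pos).const_mul e
    refine Integrable.mono' hbase
      ((cont_integrand he (fun x hx => Set.mem_Ioi.mpr (lt_trans zero_lt_one (Set.mem_Ioi.mp hx)))).aestronglyMeasurable
        measurableSet_Ioi) ?_
    rw [ae_restrict_iff' measurableSet_Ioi]
    filter_upwards with l hl
    have hl1 : (1:ℝ) < l := hl
    have hl0 : (0:ℝ) < l := lt_trans one_pos hl1
    have h1 : 0 < e + l := by linarith
    rw [Real.norm_eq_abs, abs_of_nonneg (by positivity)]
    have key : e / (e + l) ≤ e / l := div_le_div_of_nonneg_left he.le hl0 (by linarith)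
    have e1 : l ^ (q-1) * (e / l) = e * l ^ (q-2) := by
      rw [div_eq_mul_inv, ← Real.rpow_neg_one l, ← mul_assoc]
      rw [mul_comm (l ^ (q-1)) e, mul_assoc, ← Real.rpow_add hl0]
      congr 2
      ring
    calc l ^ (q-1) * (e / (e + l)) ≤ l ^ (q-1) * (e / l) := by
          apply mul_le_mul_of_nonneg_left key (Real.rpow_nonneg hl0.le _)
      _ = e * l ^ (q-2) := e1

noncomputable def cq (q : ℝ) : ℝ := ∫ l in Set.Ioi (0:ℝ), l ^ (q-1) * (1 / (1 + l))

lemma cq_pos {q : ℝ} (hq0 : 0 < q) (hq1 : q < 1) : 0 < cq q := by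
  rw [cq, setIntegral_pos_iff_support_of_nonneg_ae]
  · rw [show Function.support (fun l : ℝ => l ^ (q-1) * (1 / (1 + l))) ∩ Set.Ioi 0 = Set.Ioi 0
        from Set.inter_eq_right.mpr fun l hl => ?_]
    · simp [Real.volume_Ioi]
    · have hl' : (0:ℝ) < l := hl
      have h1 : (0:ℝ) < 1 + l := by linarith
      exact Function.mem_support.mpr (by positivity)
  · filter_upwards [ae_restrict_mem measurableSet_Ioi] with l hl
    have hl0 : (0:ℝ) < l := hl
    have h1 : (0:ℝ) < 1 + l := by linarith
    have : (0:ℝ) ≤ l ^ (q-1) * (1 / (1+l)) := by positivity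
    exact this
  · exact integrand_integrable hq0 hq1 one_pos

lemma integral_rep {q : ℝ} (hq0 : 0 < q) (hq1 : q < 1) {e : ℝ} (he : 0 < e) :
    ∫ l in Set.Ioi (0:ℝ), l ^ (q-1) * (e / (e + l)) = cq q * e ^ q := by
  have hsub := MeasureTheory.integral_comp_mul_left_Ioi
    (fun l : ℝ => l ^ (q-1) * (e / (e + l))) 0 he
  rw [mul_zero] at hsub
  have hcongr : ∫ x in Set.Ioi (0:ℝ), (e*x) ^ (q-1) * (e / (e + e*x))
      = ∫ x in Set.Ioi (0:ℝ), e ^ (q-1) * (x ^ (q-1) * (1 / (1 + x))) := by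
    apply setIntegral_congr_fun measurableSet_Ioi
    intro x hx
    dsimp only
    have hx0 : (0:ℝ) < x := hx
    have h1 : (0:ℝ) < 1 + x := by linarith
    rw [Real.mul_rpow he.le hx0.le]
    have he2 : e / (e + e*x) = 1 / (1 + x) := by
      rw [div_eq_div_iff (by positivity) (by positivity)]
      ring
    rw [he2]
    ring
  rw [hcongr, MeasureTheory.integral_const_mul] at hsub
  have h3 := congrArg (fun z => e • z) hsub
  simp only [smul_smul, mul_inv_cancel₀ he.ne', one_smul, smul_eq_mul] at h3
  rw [← cq] at h3
  have h4 := h3.symm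
  rw [← mul_assoc e e⁻¹, mul_inv_cancel₀ he.ne', one_mul] at h4
  rw [h4, ← mul_assoc]
  nth_rewrite 1 [← Real.rpow_one e]
  rw [← Real.rpow_add he]
  ring_nf

end Analysis

open MeasureTheory in
lemma sum_integral {ι : Type*} [Fintype ι] {q : ℝ} (hq0 : 0 < q) (hq1 : q < 1) (E m : ι → ℝ)
    (hE : ∀ i, 0 < E i) (hm : ∀ i, 0 ≤ m i) :
    IntegrableOn (fun l => ∑ i, l ^ (q-1) * (E i / (E i + l)) * m i) (Set.Ioi 0) volume
    ∧ ∫ l in Set.Ioi (0:ℝ), (∑ i, l ^ (q-1) * (E i / (E i + l)) * m i)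
        = cq q * ∑ i, (E i) ^ q * m i := by
  have hint : ∀ i : ι, IntegrableOn (fun l => l ^ (q-1) * (E i / (E i + l)) * m i)
      (Set.Ioi 0) volume := fun i => (integrand_integrable hq0 hq1 (hE i)).mul_const (m i)
  refine ⟨integrable_finset_sum _ (fun i _ => hint i), ?_⟩
  rw [integral_finset_sum _ (fun i _ => hint i), Finset.mul_sum]
  apply Finset.sum_congr rfl
  intro i _
  rw [integral_mul_const, integral_rep hq0 hq1 (hE i)]
  ring

variable {X Y : Matrix n n ℂ}

lemma herm_smul {X : Matrix n n ℂ} (h : X.IsHermitian) (c : ℝ) : (c • X).IsHermitian := by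
  show (c • X)ᴴ = c • X
  rw [conjTranspose_smul, star_trivial, h.eq]

lemma smul_one_posDef {l : ℝ} (hl : 0 < l) : (l • (1 : Matrix n n ℂ)).PosDef :=
  posDef_smul Matrix.PosDef.one hl

lemma gW_eq {W : Matrix n n ℂ} (hW : W.PosDef) {l : ℝ} (hl : 0 < l) :
    hW.1.cfc (fun x => x / (x + l)) = 1 - l • mpow (W + l • 1) (-1) := by
  have hWl : (W + l • 1).PosDef := hW.add (smul_one_posDef hl)
  have h1 : cfc (fun x : ℝ => x + l) W = W + l • 1 := by
    rw [cfc_add W _ _ (contOn _ W) (contOn _ W), cfc_id' ℝ W hW.1.isSelfAdjoint,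
      cfc_const l W hW.1.isSelfAdjoint, Algebra.algebraMap_eq_smul_one]
  have h2 : mpow (W + l • 1) (-1) = hW.1.cfc (fun x => (x + l) ^ (-1:ℝ)) := by
    rw [mpow_eq_cfc hWl.1, ← h1,
      ← cfc_comp (fun x : ℝ => x ^ (-1:ℝ)) (fun x : ℝ => x + l) W hW.1.isSelfAdjoint
        (contOn' _ ((Matrix.finite_real_spectrum (A := W)).image _)) (contOn _ W),
      hW.1.cfc_eq]
    rfl
  have h3 : hW.1.cfc (fun x => x / (x + l))
      = hW.1.cfc (fun x => 1 + (-l) * (x + l) ^ (-1:ℝ)) := by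
    rw [← hW.1.cfc_eq, ← hW.1.cfc_eq]
    apply cfc_congr
    intro x hx
    have hx0 : 0 < x := spec_pos hW x hx
    have hxl : 0 < x + l := by linarith
    show x / (x + l) = 1 + -l * (x + l) ^ (-1:ℝ)
    rw [Real.rpow_neg_one]
    field_simp
    ring
  rw [h3, cfc_affine hW.1 _ 1 (-l), one_smul, neg_smul, ← sub_eq_add_neg, h2]

lemma div_concave_pointwise (hX : X.PosDef) (hY : Y.PosDef)
    {a b : ℝ} (ha : 0 < a) (hb : 0 < b) (hab : a + b = 1)
    (hZ : (a • X + b • Y).PosDef) {l : ℝ} (hl : 0 < l) :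
    (hZ.1.cfc (fun x => x / (x + l)) -
      (a • hX.1.cfc (fun x => x / (x + l)) + b • hY.1.cfc (fun x => x / (x + l)))).PosSemidef := by
  have hXl : (X + l • 1).PosDef := hX.add (smul_one_posDef hl)
  have hYl : (Y + l • 1).PosDef := hY.add (smul_one_posDef hl)
  have hsum : a • (X + l • 1) + b • (Y + l • 1) = (a • X + b • Y) + l • 1 := by
    rw [smul_add, smul_add, smul_smul, smul_smul, add_add_add_comm, ← add_smul]
    rw [show a * l + b * l = l by rw [← add_mul, hab, one_mul]]
  have hIneq := inv_convex hXl hYl ha hb hab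
  rw [hsum] at hIneq
  set IX := mpow (X + l • 1) (-1)
  set IY := mpow (Y + l • 1) (-1)
  set IZ := mpow ((a • X + b • Y) + l • 1) (-1)
  have hD : hZ.1.cfc (fun x => x / (x + l)) -
      (a • hX.1.cfc (fun x => x / (x + l)) + b • hY.1.cfc (fun x => x / (x + l)))
      = l • (a • IX + b • IY - IZ) := by
    rw [gW_eq hX hl, gW_eq hY hl, gW_eq hZ hl]
    have habM : a • (1 : Matrix n n ℂ) + b • (1 : Matrix n n ℂ) = 1 := by
      rw [← add_smul, hab, one_smul]
    nth_rewrite 1 [← habM]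
    module
  rw [hD]
  exact psd_smul hIneq hl.le

set_option maxHeartbeats 1000000 in
/-- Operator concavity of `x ^ q` for `0 ≤ q ≤ 1` on positive definite matrices. -/
lemma rpow_concave (hX : X.PosDef) (hY : Y.PosDef) {a b q : ℝ}
    (ha : 0 < a) (hb : 0 < b) (hab : a + b = 1) (hq0 : 0 ≤ q) (hq1 : q ≤ 1) :
    (mpow (a • X + b • Y) q - (a • mpow X q + b • mpow Y q)).PosSemidef := by
  have hZ : (a • X + b • Y).PosDef := (posDef_smul hX ha).add (posDef_smul hY hb)
  rcases eq_or_lt_of_le hq0 with h0 | hq0'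
  · rw [← h0, mpow_zero hZ.1, mpow_zero hX.1, mpow_zero hY.1, ← add_smul, hab, one_smul,
      sub_self]
    exact Matrix.PosSemidef.zero
  rcases eq_or_lt_of_le hq1 with h1 | hq1'
  · rw [h1, mpow_one hZ.1, mpow_one hX.1, mpow_one hY.1, sub_self]
    exact Matrix.PosSemidef.zero
  -- main case
  refine Matrix.PosSemidef.of_dotProduct_mulVec_nonneg ((mpow_herm hZ.1 q).sub (((herm_smul (mpow_herm hX.1 q) a)).add
    (herm_smul (mpow_herm hY.1 q) b))) fun v => ?_
  show (0:ℂ) ≤ qf v _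
  rw [qf_sub, qf_add, qf_smul, qf_smul]
  rw [mpow_eq hZ.1, mpow_eq hX.1, mpow_eq hY.1, qf_cfc, qf_cfc, qf_cfc]
  set EX := hX.1.eigenvalues
  set EY := hY.1.eigenvalues
  set EZ := hZ.1.eigenvalues
  set mX := fun i => Complex.normSq ((star (hX.1.eigenvectorUnitary : Matrix n n ℂ) *ᵥ v) i)
  set mY := fun i => Complex.normSq ((star (hY.1.eigenvectorUnitary : Matrix n n ℂ) *ᵥ v) i)
  set mZ := fun i => Complex.normSq ((star (hZ.1.eigenvectorUnitary : Matrix n n ℂ) *ᵥ v) i)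
  have key : a * (∑ i, (EX i) ^ q * mX i) + b * (∑ i, (EY i) ^ q * mY i)
      ≤ ∑ i, (EZ i) ^ q * mZ i := by
    have hiX := sum_integral hq0' hq1' EX mX (fun i => hX.eigenvalues_pos i)
      (fun i => Complex.normSq_nonneg _)
    have hiY := sum_integral hq0' hq1' EY mY (fun i => hY.eigenvalues_pos i)
      (fun i => Complex.normSq_nonneg _)
    have hiZ := sum_integral hq0' hq1' EZ mZ (fun i => hZ.eigenvalues_pos i)
      (fun i => Complex.normSq_nonneg _)
    have hcq := cq_pos hq0' hq1'
    rw [← mul_le_mul_iff_right₀ hcq]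
    calc cq q * (a * (∑ i, (EX i) ^ q * mX i) + b * (∑ i, (EY i) ^ q * mY i))
        = a * (cq q * ∑ i, (EX i) ^ q * mX i) + b * (cq q * ∑ i, (EY i) ^ q * mY i) := by ring
      _ = a * (∫ l in Set.Ioi (0:ℝ), ∑ i, l ^ (q-1) * (EX i / (EX i + l)) * mX i)
          + b * (∫ l in Set.Ioi (0:ℝ), ∑ i, l ^ (q-1) * (EY i / (EY i + l)) * mY i) := by
          rw [hiX.2, hiY.2]
      _ = ∫ l in Set.Ioi (0:ℝ), (a * ∑ i, l ^ (q-1) * (EX i / (EX i + l)) * mX i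
          + b * ∑ i, l ^ (q-1) * (EY i / (EY i + l)) * mY i) := by
          rw [MeasureTheory.integral_add (hiX.1.const_mul a) (hiY.1.const_mul b),
            MeasureTheory.integral_const_mul, MeasureTheory.integral_const_mul]
      _ ≤ ∫ l in Set.Ioi (0:ℝ), ∑ i, l ^ (q-1) * (EZ i / (EZ i + l)) * mZ i := by
          apply MeasureTheory.setIntegral_mono_on
            ((hiX.1.const_mul a).add (hiY.1.const_mul b)) hiZ.1 measurableSet_Ioi
          intro l hl
          have hl0 : (0:ℝ) < l := hl
          -- pointwise inequality from operator convexity of the inverse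
          have hpt := div_concave_pointwise hX hY ha hb hab hZ hl0
          have h1 := hpt.dotProduct_mulVec_nonneg v
          rw [show dotProduct _ _ = qf v _ from rfl, qf_sub, qf_add, qf_smul, qf_smul,
            qf_cfc, qf_cfc, qf_cfc] at h1
          rw [sub_nonneg] at h1
          have h2 : a • ((∑ i, (EX i / (EX i + l)) * mX i : ℝ) : ℂ)
              + b • ((∑ i, (EY i / (EY i + l)) * mY i : ℝ) : ℂ)
              = (((a * ∑ i, (EX i / (EX i + l)) * mX i
                + b * ∑ i, (EY i / (EY i + l)) * mY i : ℝ)) : ℂ) := by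
            push_cast [Complex.real_smul]
            ring
          rw [h2, Complex.real_le_real] at h1
          calc a * ∑ i, l ^ (q-1) * (EX i / (EX i + l)) * mX i
              + b * ∑ i, l ^ (q-1) * (EY i / (EY i + l)) * mY i
              = l ^ (q-1) * (a * ∑ i, (EX i / (EX i + l)) * mX i
                + b * ∑ i, (EY i / (EY i + l)) * mY i) := by
                have eX : ∑ i, l ^ (q-1) * (EX i / (EX i + l)) * mX i
                    = l ^ (q-1) * ∑ i, (EX i / (EX i + l)) * mX i := by
                  rw [Finset.mul_sum]
                  exact Finset.sum_congr rfl fun i _ => by ring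
                have eY : ∑ i, l ^ (q-1) * (EY i / (EY i + l)) * mY i
                    = l ^ (q-1) * ∑ i, (EY i / (EY i + l)) * mY i := by
                  rw [Finset.mul_sum]
                  exact Finset.sum_congr rfl fun i _ => by ring
                rw [eX, eY]
                ring
            _ ≤ l ^ (q-1) * ∑ i, (EZ i / (EZ i + l)) * mZ i := by
                apply mul_le_mul_of_nonneg_left h1 (Real.rpow_nonneg hl0.le _)
            _ = ∑ i, l ^ (q-1) * (EZ i / (EZ i + l)) * mZ i := by
                rw [Finset.mul_sum]
                apply Finset.sum_congr rfl
                intro i _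
                ring
      _ = cq q * ∑ i, (EZ i) ^ q * mZ i := hiZ.2
  -- conclude over ℂ
  have hc : a • ((∑ i, (EX i) ^ q * mX i : ℝ) : ℂ) + b • ((∑ i, (EY i) ^ q * mY i : ℝ) : ℂ)
      = (((a * ∑ i, (EX i) ^ q * mX i + b * ∑ i, (EY i) ^ q * mY i : ℝ)) : ℂ) := by
    push_cast [Complex.real_smul]
    ring
  rw [hc, sub_nonneg, Complex.real_le_real]
  exact key

/-- Operator convexity of `x ^ (-p)` for `0 ≤ p ≤ 1`. -/
lemma rpow_neg_convex (hX : X.PosDef) (hY : Y.PosDef) {a b p : ℝ}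
    (ha : 0 < a) (hb : 0 < b) (hab : a + b = 1) (hp0 : 0 ≤ p) (hp1 : p ≤ 1) :
    (a • mpow X (-p) + b • mpow Y (-p) - mpow (a • X + b • Y) (-p)).PosSemidef := by
  have hZ : (a • X + b • Y).PosDef := (posDef_smul hX ha).add (posDef_smul hY hb)
  rcases eq_or_lt_of_le hp0 with h0 | hp0'
  · rw [← h0, neg_zero, mpow_zero hZ.1, mpow_zero hX.1, mpow_zero hY.1, ← add_smul, hab,
      one_smul, sub_self]
    exact Matrix.PosSemidef.zero
  have hconc := rpow_concave hX hY ha hb hab hp0 hp1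
  have hG : (a • mpow X p + b • mpow Y p).PosDef :=
    (posDef_smul (mpow_posDef hX p) ha).add (posDef_smul (mpow_posDef hY p) hb)
  have hH : (mpow (a • X + b • Y) p).PosDef := mpow_posDef hZ p
  have hanti := inv_antitone hG hH hconc
  have e1 : mpow (mpow (a • X + b • Y) p) (-1) = mpow (a • X + b • Y) (-p) := by
    rw [mpow_mpow hZ]
    norm_num
  have hconv := inv_convex (mpow_posDef hX p) (mpow_posDef hY p) ha hb hab
  have e2 : mpow (mpow X p) (-1) = mpow X (-p) := by rw [mpow_mpow hX]; norm_num
  have e3 : mpow (mpow Y p) (-1) = mpow Y (-p) := by rw [mpow_mpow hY]; norm_num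
  rw [e2, e3] at hconv
  rw [e1] at hanti
  exact lw_trans hanti hconv

lemma qf_smul_one_single (hA : A.IsHermitian) (i : n) (t : ℝ) :
    qf ((hA.eigenvectorUnitary : Matrix n n ℂ) *ᵥ Pi.single i 1) (t • (1 : Matrix n n ℂ))
      = (t : ℂ) := by
  rw [← cfc_const_smul_one hA t, qf_cfc_single]

lemma lambdaMin_mpow [Nonempty n] {C : Matrix n n ℂ} (hC : C.PosDef) {s : ℝ} (hs : 0 ≤ s) :
    lambdaMin (mpow C s) = (lambdaMin C) ^ s := by
  have hD := mpow_posDef hC s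
  have hm := lambdaMin_pos hC
  apply le_antisymm
  · obtain ⟨i0, hi0⟩ := lambdaMin_mem hC.1
    set v := (hC.1.eigenvectorUnitary : Matrix n n ℂ) *ᵥ Pi.single i0 1 with hv
    have h1 : qf v (mpow C s) = ((lambdaMin C ^ s : ℝ) : ℂ) := by
      rw [mpow_eq hC.1, hv, qf_cfc_single hC.1 _ i0, hi0]
    have h2 : (mpow C s - lambdaMin (mpow C s) • 1).PosSemidef :=
      (psd_sub_smul_iff_lambdaMin hD.1 _).mpr le_rfl
    have h3 := h2.dotProduct_mulVec_nonneg v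
    rw [show dotProduct _ _ = qf v (mpow C s - lambdaMin (mpow C s) • 1) from rfl,
      qf_sub, h1, hv, qf_smul_one_single hC.1, ← Complex.ofReal_sub,
      Complex.zero_le_real, sub_nonneg] at h3
    exact h3
  · rw [← psd_sub_smul_iff_lambdaMin hD.1]
    have e1 : mpow C s - (lambdaMin C ^ s) • 1 = hC.1.cfc (fun x => x ^ s - lambdaMin C ^ s) := by
      rw [cfc_sub' hC.1, cfc_const_smul_one hC.1, ← mpow_eq hC.1]
    rw [e1]
    refine psd_cfc hC.1 fun i => ?_
    have := Real.rpow_le_rpow hm.le (lambdaMin_le hC.1 i) hs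
    linarith

lemma conj_reduce (hA : A.PosDef) (α t : ℝ) (X : Matrix n n ℂ) :
    (mpow A α * X * mpow A α - t • 1).PosSemidef
      ↔ (X - t • (mpow A (-α) * mpow A (-α))).PosSemidef := by
  have h1 : mpow A (-α) * mpow A α = 1 := by rw [mpow_mul hA]; norm_num [mpow_zero hA.1]
  have h2 : mpow A α * mpow A (-α) = 1 := by rw [mpow_mul hA]; norm_num [mpow_zero hA.1]
  have hMH : (mpow A (-α))ᴴ = mpow A (-α) := (mpow_herm hA.1 _).eq
  have hNH : (mpow A α)ᴴ = mpow A α := (mpow_herm hA.1 _).eq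
  constructor
  · intro h
    have h3 := lw_conj h (mpow A (-α))
    rw [hMH] at h3
    have e1 : mpow A (-α) * (mpow A α * X * mpow A α) * mpow A (-α) = X := by
      calc mpow A (-α) * (mpow A α * X * mpow A α) * mpow A (-α)
          = (mpow A (-α) * mpow A α) * (X * (mpow A α * mpow A (-α))) := by
            simp only [Matrix.mul_assoc]
        _ = X := by rw [h1, h2, one_mul, mul_one]
    have e2 : mpow A (-α) * (t • 1) * mpow A (-α) = t • (mpow A (-α) * mpow A (-α)) := by
      rw [Matrix.mul_smul, mul_one, Matrix.smul_mul]
    rwa [e1, e2] at h3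
  · intro h
    have h3 := lw_conj h (mpow A α)
    rw [hNH] at h3
    have e1 : mpow A α * (t • (mpow A (-α) * mpow A (-α))) * mpow A α = t • 1 := by
      rw [Matrix.mul_smul, Matrix.smul_mul]
      congr 1
      calc mpow A α * (mpow A (-α) * mpow A (-α)) * mpow A α
          = (mpow A α * mpow A (-α)) * (mpow A (-α) * mpow A α) := by
            simp only [Matrix.mul_assoc]
        _ = 1 := by rw [h1, h2, one_mul]
    rwa [e1] at h3

lemma M_posDef (hA : A.PosDef) (hB : X.PosDef) (α β : ℝ) :
    (mpow A α * mpow X β * mpow A α).PosDef := by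
  have h1 : mpow A (-α) * mpow A α = 1 := by rw [mpow_mul hA]; norm_num [mpow_zero hA.1]
  have := posDef_conj (mpow_posDef hB β) (M := mpow A α) (N := mpow A (-α)) h1
  rwa [(mpow_herm hA.1 α).eq] at this

lemma mpow_smul (hA : A.PosDef) {c : ℝ} (hc : 0 < c) (r : ℝ) :
    mpow (c • A) r = c ^ r • mpow A r := by
  have hsmul : cfc (fun x : ℝ => c • x) A = c • A := by
    rw [cfc_smul (R := ℝ) c (fun x => x) A (contOn _ A), cfc_id' ℝ A hA.1.isSelfAdjoint]
  rw [mpow_eq_cfc (posDef_smul hA hc).1, ← hsmul,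
    ← cfc_comp (fun x : ℝ => x ^ r) (fun x : ℝ => c • x) A hA.1.isSelfAdjoint
      (contOn' _ ((Matrix.finite_real_spectrum (A := A)).image _)) (contOn _ A),
    mpow_eq_cfc hA.1, ← cfc_smul (R := ℝ) (c ^ r) (fun x => x ^ r) A (contOn _ A)]
  apply cfc_congr
  intro z hz
  show (c • z) ^ r = c ^ r • z ^ r
  rw [smul_eq_mul, smul_eq_mul, Real.mul_rpow hc.le (spec_pos hA z hz).le]

lemma comb_posDef (hX : X.PosDef) (hY : Y.PosDef) {a b : ℝ}
    (ha : 0 ≤ a) (hb : 0 ≤ b) (hab : a + b = 1) : (a • X + b • Y).PosDef := by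
  rcases eq_or_lt_of_le ha with h | h
  · rw [← h, zero_smul, zero_add, show b = 1 by linarith, one_smul]
    exact hY
  · rcases eq_or_lt_of_le hb with h2 | h2
    · rw [← h2, zero_smul, add_zero, show a = 1 by linarith, one_smul]
      exact hX
    · exact (posDef_smul hX h).add (posDef_smul hY h2)

lemma key_iff (hA : A.PosDef) (hB : X.PosDef) (p q t : ℝ) :
    ((mpow A (p/2) * mpow X q * mpow A (p/2)) - t • 1).PosSemidef
      ↔ (mpow X q - t • mpow A (-p)).PosSemidef := by
  have h := conj_reduce hA (p/2) t (mpow X q)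
  have e : mpow A (-(p/2)) * mpow A (-(p/2)) = mpow A (-p) := by
    rw [mpow_mul hA, show -(p/2) + -(p/2) = -p by ring]
  rw [e] at h
  exact h

lemma scalar_key {τ σ p q r : ℝ} (hτ : 0 < τ) (hσ : 0 < σ) (hr : r = p + q) :
    (τ/σ)^q * σ^r = τ^r * (τ/σ)^(-p) := by
  have h1 := Real.rpow_pos_of_pos hτ p
  have h2 := Real.rpow_pos_of_pos hτ q
  have h3 := Real.rpow_pos_of_pos hσ p
  have h4 := Real.rpow_pos_of_pos hσ q
  rw [Real.rpow_neg (div_nonneg hτ.le hσ.le), Real.div_rpow hτ.le hσ.le,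
    Real.div_rpow hτ.le hσ.le, hr, Real.rpow_add hσ, Real.rpow_add hτ]
  field_simp

lemma lambdaMin_empty [IsEmpty n] (Z : Matrix n n ℂ) : lambdaMin Z = 0 := by
  rw [lambdaMin]
  split
  · rw [iInf, Set.range_eq_empty, Real.sInf_empty]
  · rfl
end Aux

open Aux in
set_option maxHeartbeats 2000000 in
/-- Theorem 5.1(1) with `Φ = Ψ = id`: for `0 ≤ p, q ≤ 1`, `(p,q) ≠ (0,0)` and
`s = 1/(p+q)`, the smallest-eigenvalue function
`(A,B) ↦ λ_min((A^{p/2} B^q A^{p/2})^s)` is jointly concave on positive definite pairs. -/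
theorem stmt10 {n : Type*} [Fintype n] [DecidableEq n]
    (p q s : ℝ) (hp0 : 0 ≤ p) (hp1 : p ≤ 1) (hq0 : 0 ≤ q) (hq1 : q ≤ 1)
    (hpq : (p, q) ≠ (0, 0)) (hs : s = 1 / (p + q)) :
    ConcaveOn ℝ {AB : Matrix n n ℂ × Matrix n n ℂ | AB.1.PosDef ∧ AB.2.PosDef}
      (fun AB => lambdaMin (mpow (mpow AB.1 (p/2) * mpow AB.2 q * mpow AB.1 (p/2)) s)) := by
  have hr : 0 < p + q := by
    rcases eq_or_lt_of_le hp0 with h | h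
    · rcases eq_or_lt_of_le hq0 with h2 | h2
      · exact absurd (by rw [← h, ← h2]) hpq
      · linarith
    · linarith
  have hspos : 0 < s := by rw [hs]; positivity
  constructor
  · intro x hx y hy a b ha hb hab
    exact ⟨comb_posDef hx.1 hy.1 ha hb hab, comb_posDef hx.2 hy.2 ha hb hab⟩
  intro x hx y hy a b ha hb hab
  obtain ⟨hA1, hB1⟩ := hx
  obtain ⟨hA2, hB2⟩ := hy
  rcases eq_or_lt_of_le ha with ha0 | ha0
  · simp only [← ha0, zero_smul, zero_add, show b = 1 by linarith, one_smul, le_refl]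
  rcases eq_or_lt_of_le hb with hb0 | hb0
  · simp only [← hb0, zero_smul, add_zero, show a = 1 by linarith, one_smul, le_refl]
  cases isEmpty_or_nonempty n with
  | inl hempty =>
      simp only [lambdaMin_empty, smul_zero, add_zero, le_refl]
  | inr hne =>
  simp only [Prod.fst_add, Prod.smul_fst, Prod.snd_add, Prod.smul_snd, smul_eq_mul]
  have hA₀ : (a • x.1 + b • y.1).PosDef := comb_posDef hA1 hA2 ha0.le hb0.le hab
  have hB₀ : (a • x.2 + b • y.2).PosDef := comb_posDef hB1 hB2 ha0.le hb0.le hab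
  have hM₁ : (mpow x.1 (p/2) * mpow x.2 q * mpow x.1 (p/2)).PosDef := M_posDef hA1 hB1 _ _
  have hM₂ : (mpow y.1 (p/2) * mpow y.2 q * mpow y.1 (p/2)).PosDef := M_posDef hA2 hB2 _ _
  have hM₀ : (mpow (a • x.1 + b • y.1) (p/2) * mpow (a • x.2 + b • y.2) q *
      mpow (a • x.1 + b • y.1) (p/2)).PosDef := M_posDef hA₀ hB₀ _ _
  set t₁ := lambdaMin (mpow x.1 (p/2) * mpow x.2 q * mpow x.1 (p/2)) with ht₁def
  set t₂ := lambdaMin (mpow y.1 (p/2) * mpow y.2 q * mpow y.1 (p/2)) with ht₂def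
  have ht₁ : 0 < t₁ := lambdaMin_pos hM₁
  have ht₂ : 0 < t₂ := lambdaMin_pos hM₂
  rw [lambdaMin_mpow hM₁ hspos.le, lambdaMin_mpow hM₂ hspos.le,
    lambdaMin_mpow hM₀ hspos.le]
  set τ₁ := t₁ ^ s with hτ₁def
  set τ₂ := t₂ ^ s with hτ₂def
  have hτ₁ : 0 < τ₁ := Real.rpow_pos_of_pos ht₁ s
  have hτ₂ : 0 < τ₂ := Real.rpow_pos_of_pos ht₂ s
  set τ := a * τ₁ + b * τ₂ with hτdef
  have hτ : 0 < τ := by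
    rw [hτdef]
    exact add_pos (mul_pos ha0 hτ₁) (mul_pos hb0 hτ₂)
  have hsr : s * (p + q) = 1 := by rw [hs]; field_simp
  have hτ₁r : τ₁ ^ (p+q) = t₁ := by
    rw [hτ₁def, ← Real.rpow_mul ht₁.le, hsr, Real.rpow_one]
  have hτ₂r : τ₂ ^ (p+q) = t₂ := by
    rw [hτ₂def, ← Real.rpow_mul ht₂.le, hsr, Real.rpow_one]
  have hkey₁ : (mpow x.2 q - t₁ • mpow x.1 (-p)).PosSemidef :=
    (key_iff hA1 hB1 p q t₁).mp ((psd_sub_smul_iff_lambdaMin hM₁.1 t₁).mpr le_rfl)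
  have hkey₂ : (mpow y.2 q - t₂ • mpow y.1 (-p)).PosSemidef :=
    (key_iff hA2 hB2 p q t₂).mp ((psd_sub_smul_iff_lambdaMin hM₂.1 t₂).mpr le_rfl)
  set c₁ := a * τ₁ / τ with hc₁def
  set c₂ := b * τ₂ / τ with hc₂def
  have hc₁ : 0 < c₁ := by rw [hc₁def]; exact div_pos (mul_pos ha0 hτ₁) hτ
  have hc₂ : 0 < c₂ := by rw [hc₂def]; exact div_pos (mul_pos hb0 hτ₂) hτ
  have hcsum : c₁ + c₂ = 1 := by
    rw [hc₁def, hc₂def, ← add_div, ← hτdef]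
    exact div_self hτ.ne'
  have hd₁ : 0 < τ / τ₁ := div_pos hτ hτ₁
  have hd₂ : 0 < τ / τ₂ := div_pos hτ hτ₂
  have hX₁ : ((τ/τ₁) • x.1).PosDef := posDef_smul hA1 hd₁
  have hX₂ : ((τ/τ₂) • y.1).PosDef := posDef_smul hA2 hd₂
  have hY₁ : ((τ/τ₁) • x.2).PosDef := posDef_smul hB1 hd₁
  have hY₂ : ((τ/τ₂) • y.2).PosDef := posDef_smul hB2 hd₂
  have e1 : c₁ * (τ/τ₁) = a := by
    rw [hc₁def]
    field_simp
  have e2 : c₂ * (τ/τ₂) = b := by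
    rw [hc₂def]
    field_simp
  have hcombA : c₁ • ((τ/τ₁) • x.1) + c₂ • ((τ/τ₂) • y.1) = a • x.1 + b • y.1 := by
    rw [smul_smul, smul_smul, e1, e2]
  have hcombB : c₁ • ((τ/τ₁) • x.2) + c₂ • ((τ/τ₂) • y.2) = a • x.2 + b • y.2 := by
    rw [smul_smul, smul_smul, e1, e2]
  have hstep1 : (mpow (a • x.2 + b • y.2) q
      - (c₁ • mpow ((τ/τ₁) • x.2) q + c₂ • mpow ((τ/τ₂) • y.2) q)).PosSemidef := by
    have h := rpow_concave hY₁ hY₂ hc₁ hc₂ hcsum hq0 hq1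
    rwa [hcombB] at h
  have hstep3₁ : (mpow ((τ/τ₁) • x.2) q
      - (τ^(p+q)) • mpow ((τ/τ₁) • x.1) (-p)).PosSemidef := by
    have h := lw_smul hkey₁ (Real.rpow_nonneg hd₁.le q)
    rw [← mpow_smul hB1 hd₁ q, smul_smul,
      show ((τ/τ₁):ℝ)^q * t₁ = τ^(p+q) * (τ/τ₁)^(-p) by
        rw [← hτ₁r]; exact scalar_key hτ hτ₁ rfl,
      ← smul_smul, ← mpow_smul hA1 hd₁ (-p)] at h
    exact h
  have hstep3₂ : (mpow ((τ/τ₂) • y.2) q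
      - (τ^(p+q)) • mpow ((τ/τ₂) • y.1) (-p)).PosSemidef := by
    have h := lw_smul hkey₂ (Real.rpow_nonneg hd₂.le q)
    rw [← mpow_smul hB2 hd₂ q, smul_smul,
      show ((τ/τ₂):ℝ)^q * t₂ = τ^(p+q) * (τ/τ₂)^(-p) by
        rw [← hτ₂r]; exact scalar_key hτ hτ₂ rfl,
      ← smul_smul, ← mpow_smul hA2 hd₂ (-p)] at h
    exact h
  have hstep4 := lw_add (lw_smul hstep3₁ hc₁.le) (lw_smul hstep3₂ hc₂.le)
  rw [smul_comm c₁ (τ^(p+q)), smul_comm c₂ (τ^(p+q)), ← smul_add] at hstep4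
  have hstep5 : ((τ^(p+q)) • (c₁ • mpow ((τ/τ₁) • x.1) (-p) + c₂ • mpow ((τ/τ₂) • y.1) (-p))
      - (τ^(p+q)) • mpow (a • x.1 + b • y.1) (-p)).PosSemidef := by
    have h := lw_smul (rpow_neg_convex hX₁ hX₂ hc₁ hc₂ hcsum hp0 hp1)
      (Real.rpow_nonneg hτ.le (p+q))
    rwa [hcombA] at h
  have hfinal := lw_trans (lw_trans hstep5 hstep4) hstep1
  have hM0ineq := (key_iff hA₀ hB₀ p q (τ^(p+q))).mpr hfinal
  have hlam := (psd_sub_smul_iff_lambdaMin hM₀.1 (τ^(p+q))).mp hM0ineq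
  calc a * τ₁ + b * τ₂ = τ := hτdef.symm
    _ = (τ^(p+q))^s := by
        rw [← Real.rpow_mul hτ.le, show (p+q) * s = 1 by rw [mul_comm]; exact hsr,
          Real.rpow_one]
    _ ≤ _ := Real.rpow_le_rpow (Real.rpow_nonneg hτ.le (p+q)) hlam hspos.le
end

section
/- Let p, q be nonzero reals and s > 0. If the function (A,B) ↦ ‖(A^{p/2}B^q A^{p/2})^s‖_∞ is jointly convex on pairs of positive definite n×n matrices, then for every pair of positive definite n×n matrices A, B one has ((A^{1/q}+B^{1/q})/2)^q ≤ ((A^{-1/p}+B^{-1/p})/2)^{-p} in the Loewner order. -/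
open Matrix
open scoped ComplexOrder

section Aux
variable {n : Type*} [Fintype n] [DecidableEq n]


lemma mpow_eq_cfc {A : Matrix n n ℂ} (hA : A.IsHermitian) (r : ℝ) :
    mpow A r = cfc (fun x : ℝ => x ^ r) A := by
  rw [Matrix.IsHermitian.cfc_eq hA, mpow, dif_pos hA]
  rfl

lemma spectrum_pos {A : Matrix n n ℂ} (hA : A.PosDef) :
    ∀ x ∈ spectrum ℝ A, 0 < x := by
  intro x hx
  rw [hA.1.spectrum_real_eq_range_eigenvalues] at hx
  obtain ⟨i, rfl⟩ := hx
  exact hA.eigenvalues_pos i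

lemma contOn_rpow {A : Matrix n n ℂ} (hA : A.PosDef) (r : ℝ) :
    ContinuousOn (fun x : ℝ => x ^ r) (spectrum ℝ A) := fun x hx =>
  (Real.continuousAt_rpow_const x r (Or.inl (spectrum_pos hA x hx).ne')).continuousWithinAt

lemma posDef_conjTranspose_mul_mul {M : Matrix n n ℂ} (hM : M.PosDef)
    {B : Matrix n n ℂ} (hB : IsUnit B) : (Bᴴ * M * B).PosDef := by
  refine posDef_iff_dotProduct_mulVec.mpr ⟨isHermitian_conjTranspose_mul_mul B hM.1, fun x hx => ?_⟩
  have hBx : B *ᵥ x ≠ 0 := fun h0 => hx <|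
    (Matrix.mulVec_injective_iff_isUnit.mpr hB) (h0.trans (Matrix.mulVec_zero B).symm)
  simpa only [star_mulVec, dotProduct_mulVec, vecMul_vecMul] using hM.dotProduct_mulVec_pos hBx

lemma mpow_posDef {A : Matrix n n ℂ} (hA : A.PosDef) (r : ℝ) : (mpow A r).PosDef := by
  rw [mpow, dif_pos hA.1]
  have hU : IsUnit (star (hA.1.eigenvectorUnitary : Matrix n n ℂ)) :=
    ⟨Unitary.toUnits (star hA.1.eigenvectorUnitary), rfl⟩
  have hD : (Matrix.diagonal (fun i => ((hA.1.eigenvalues i ^ r : ℝ) : ℂ))).PosDef :=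
    Matrix.PosDef.diagonal fun i => by
      simpa using Real.rpow_pos_of_pos (hA.eigenvalues_pos i) r
  have := posDef_conjTranspose_mul_mul hD hU
  simpa [Matrix.star_eq_conjTranspose] using this

lemma mpow_mul_mpow {A : Matrix n n ℂ} (hA : A.PosDef) (r t : ℝ) :
    mpow A r * mpow A t = mpow A (r + t) := by
  rw [mpow_eq_cfc hA.1, mpow_eq_cfc hA.1, mpow_eq_cfc hA.1,
    ← cfc_mul _ _ A (contOn_rpow hA r) (contOn_rpow hA t)]
  exact cfc_congr fun x hx => (Real.rpow_add (spectrum_pos hA x hx) r t).symm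

lemma mpow_mpow {A : Matrix n n ℂ} (hA : A.PosDef) (r t : ℝ) :
    mpow (mpow A r) t = mpow A (r * t) := by
  rw [mpow_eq_cfc (mpow_posDef hA r).1, mpow_eq_cfc hA.1, mpow_eq_cfc hA.1]
  have hg : ContinuousOn (fun x : ℝ => x ^ t) ((fun x : ℝ => x ^ r) '' spectrum ℝ A) := by
    rintro y ⟨x, hx, rfl⟩
    exact (Real.continuousAt_rpow_const _ t
      (Or.inl (Real.rpow_pos_of_pos (spectrum_pos hA x hx) r).ne')).continuousWithinAt
  have hcomp : cfc (fun x : ℝ => (x ^ r) ^ t) A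
      = cfc (fun x : ℝ => x ^ t) (cfc (fun x : ℝ => x ^ r) A) :=
    cfc_comp' (fun x : ℝ => x ^ t) (fun x : ℝ => x ^ r) A hg (contOn_rpow hA r) hA.1
  rw [← hcomp]
  exact cfc_congr fun x hx => by rw [Real.rpow_mul (spectrum_pos hA x hx).le]

lemma mpow_one_exp {A : Matrix n n ℂ} (hA : A.PosDef) : mpow A 1 = A := by
  rw [mpow_eq_cfc hA.1]
  rw [show (fun x : ℝ => x ^ (1:ℝ)) = (id : ℝ → ℝ) from funext fun x => Real.rpow_one x]
  exact cfc_id ℝ A hA.1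

lemma mpow_zero_exp {A : Matrix n n ℂ} (hA : A.PosDef) : mpow A 0 = 1 := by
  rw [mpow_eq_cfc hA.1]
  rw [show (fun x : ℝ => x ^ (0:ℝ)) = (1 : ℝ → ℝ) from funext fun x => Real.rpow_zero x]
  exact cfc_one ℝ A hA.1

lemma mpow_one_base (s : ℝ) : mpow (1 : Matrix n n ℂ) s = 1 := by
  rw [mpow_eq_cfc Matrix.isHermitian_one]
  rw [show (1 : Matrix n n ℂ) = algebraMap ℝ (Matrix n n ℂ) 1 from (_root_.map_one _).symm]
  rw [cfc_algebraMap (1 : ℝ) (fun x : ℝ => x ^ s)]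
  simp [Real.one_rpow]

lemma smul_posDef {M : Matrix n n ℂ} (hM : M.PosDef) {c : ℝ} (hc : 0 < c) :
    ((c : ℝ) • M).PosDef := by
  have hcs : (c : ℝ) • M = ((c : ℂ)) • M := by
    ext i j; simp [Complex.real_smul]
  rw [hcs]
  refine posDef_iff_dotProduct_mulVec.mpr ⟨?_, fun x hx => ?_⟩
  · have := hM.1
    rw [Matrix.IsHermitian, conjTranspose_smul, this]
    simp [Complex.conj_ofReal]
  · rw [Matrix.smul_mulVec, dotProduct_smul]
    have h1 := hM.dotProduct_mulVec_pos hx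
    rw [RCLike.pos_iff] at h1 ⊢
    constructor
    · simpa using mul_pos hc h1.1
    · simpa using Or.inr h1.2

lemma lambdaMax_one [Nonempty n] : lambdaMax (1 : Matrix n n ℂ) = 1 := by
  rw [lambdaMax, dif_pos Matrix.isHermitian_one]
  have h1 : ∀ i, (Matrix.isHermitian_one (n := n) (α := ℂ)).eigenvalues i = 1 := by
    intro i
    have := (Matrix.isHermitian_one (n := n) (α := ℂ)).eigenvalues_mem_spectrum_real i
    rw [spectrum.one_eq] at this
    simpa using this
  simp [h1]

lemma one_sub_posSemidef {X : Matrix n n ℂ} (hX : X.PosDef) {s : ℝ} (hs : 0 < s)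
    (hle : lambdaMax (mpow X s) ≤ 1) : ((1 : Matrix n n ℂ) - X).PosSemidef := by
  have hXs : (mpow X s).PosDef := mpow_posDef hX s
  -- each eigenvalue of X is ≤ 1
  have claim : ∀ i, hX.1.eigenvalues i ≤ 1 := by
    intro i
    have hspec : spectrum ℝ (mpow X s) = (fun x : ℝ => x ^ s) '' spectrum ℝ X := by
      rw [mpow_eq_cfc hX.1]
      exact cfc_map_spectrum (ha := hX.1) (hf := contOn_rpow hX s)
    have hmem : (hX.1.eigenvalues i) ^ s ∈ spectrum ℝ (mpow X s) :=
      hspec ▸ ⟨hX.1.eigenvalues i, hX.1.eigenvalues_mem_spectrum_real i, rfl⟩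
    rw [hXs.1.spectrum_real_eq_range_eigenvalues] at hmem
    obtain ⟨j, hj⟩ := hmem
    have hle' : (hX.1.eigenvalues i) ^ s ≤ 1 := by
      rw [← hj]
      refine le_trans ?_ hle
      rw [lambdaMax, dif_pos hXs.1]
      exact le_ciSup (Set.Finite.bddAbove (Set.finite_range _)) j
    by_contra hcon
    push_neg at hcon
    have : 1 < (hX.1.eigenvalues i) ^ s :=
      (Real.one_lt_rpow_iff_of_pos (lt_trans zero_lt_one hcon)).mpr (Or.inl ⟨hcon, hs⟩)
    linarith
  -- rewrite 1 - X as a conjugated diagonal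
  set U : Matrix n n ℂ := (hX.1.eigenvectorUnitary : Matrix n n ℂ) with hU
  have hdecomp : (1 : Matrix n n ℂ) - X =
      U * Matrix.diagonal (fun i => ((1 - hX.1.eigenvalues i : ℝ) : ℂ)) * star U := by
    conv_lhs => rw [hX.1.spectral_theorem, Unitary.conjStarAlgAut_apply]
    have h1 : (1 : Matrix n n ℂ) = U * (1 : Matrix n n ℂ) * star U := by
      rw [mul_one, (Unitary.mem_iff.mp (SetLike.coe_mem hX.1.eigenvectorUnitary)).2]
    conv_lhs => rw [h1]
    rw [← sub_mul, ← mul_sub]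
    congr 1
    congr 1
    rw [← Matrix.diagonal_one, Matrix.diagonal_sub]
    congr 1
    ext i
    push_cast
    rfl
  rw [hdecomp, Matrix.star_eq_conjTranspose]
  refine Matrix.PosSemidef.mul_mul_conjTranspose_same ?_ U
  refine Matrix.posSemidef_diagonal_iff.mpr fun i => ?_
  exact Complex.zero_le_real.mpr (by linarith [claim i])

lemma key_step {C D : Matrix n n ℂ} (hC : C.PosDef) (hD : D.PosDef) {p q s : ℝ} (hs : 0 < s)
    (hle : lambdaMax (mpow (mpow C (p/2) * mpow D q * mpow C (p/2)) s) ≤ 1) :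
    (mpow C (-p) - mpow D q).PosSemidef := by
  set E := mpow C (p/2) with hE
  set M := mpow D q with hM
  have hEpd : E.PosDef := mpow_posDef hC (p/2)
  have hMpd : M.PosDef := mpow_posDef hD q
  have hX0 : (E * M * E).PosDef := by
    have := posDef_conjTranspose_mul_mul hMpd hEpd.isUnit
    rwa [hEpd.1.eq] at this
  have psd1 : ((1 : Matrix n n ℂ) - (E * M * E)).PosSemidef := one_sub_posSemidef hX0 hs hle
  set E' := mpow C (-(p/2)) with hE'
  have hE'pd : E'.PosDef := mpow_posDef hC _
  have psd2 := psd1.mul_mul_conjTranspose_same E'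
  rw [hE'pd.1.eq] at psd2
  have hEE' : E * E' = 1 := by
    rw [hE, hE', mpow_mul_mpow hC, add_neg_cancel, mpow_zero_exp hC]
  have hE'E : E' * E = 1 := by
    rw [hE, hE', mpow_mul_mpow hC, neg_add_cancel, mpow_zero_exp hC]
  have hE'E' : E' * E' = mpow C (-p) := by
    rw [hE', mpow_mul_mpow hC, show -(p/2) + -(p/2) = -p by ring]
  have h3 : E' * (E * M * E) * E' = M := by
    rw [← mul_assoc E' (E * M) E, ← mul_assoc E' E M, hE'E, one_mul, mul_assoc M E E',
      hEE', mul_one]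
  have hcalc : E' * ((1 : Matrix n n ℂ) - (E * M * E)) * E' = mpow C (-p) - M := by
    rw [mul_sub, sub_mul, mul_one, hE'E', h3]
  rwa [hcalc] at psd2


end Aux

/-- Lemma 5.3: if `p, q ≠ 0`, `s > 0` and `(A,B) ↦ ‖(A^{p/2} B^q A^{p/2})^s‖∞` is jointly
convex on positive definite pairs, then
`((A^{1/q}+B^{1/q})/2)^q ≤ ((A^{-1/p}+B^{-1/p})/2)^{-p}` for all positive definite `A, B`. -/

theorem stmt12 {n : Type*} [Fintype n] [DecidableEq n]
    (p q s : ℝ) (hp : p ≠ 0) (hq : q ≠ 0) (hs : 0 < s)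
    (h : ConvexOn ℝ {AB : Matrix n n ℂ × Matrix n n ℂ | AB.1.PosDef ∧ AB.2.PosDef}
      (fun AB => lambdaMax (mpow (mpow AB.1 (p/2) * mpow AB.2 q * mpow AB.1 (p/2)) s)))
    (A B : Matrix n n ℂ) (hA : A.PosDef) (hB : B.PosDef) :
    loewner (mpow ((1/2 : ℝ) • (mpow A (1/q) + mpow B (1/q))) q)
      (mpow ((1/2 : ℝ) • (mpow A (-1/p) + mpow B (-1/p))) (-p)) := by
  rcases isEmpty_or_nonempty n with hn | hn
  · refine ⟨?_, fun x => ?_⟩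
    · ext i j
      exact isEmptyElim i
    · simp [Finsupp.sum, Finset.eq_empty_of_isEmpty x.support]
  set P₁ := mpow A (-1/p) with hP₁
  set Q₁ := mpow A (1/q) with hQ₁
  set P₂ := mpow B (-1/p) with hP₂
  set Q₂ := mpow B (1/q) with hQ₂
  set C := (1/2 : ℝ) • (P₁ + P₂) with hCdef
  set D := (1/2 : ℝ) • (Q₁ + Q₂) with hDdef
  have hC : C.PosDef := smul_posDef ((mpow_posDef hA _).add (mpow_posDef hB _)) one_half_pos
  have hD : D.PosDef := smul_posDef ((mpow_posDef hA _).add (mpow_posDef hB _)) one_half_pos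
  -- the value of the convex function at each endpoint is 1
  have hval : ∀ (M : Matrix n n ℂ), M.PosDef →
      lambdaMax (mpow (mpow (mpow M (-1/p)) (p/2) * mpow (mpow M (1/q)) q
        * mpow (mpow M (-1/p)) (p/2)) s) = 1 := by
    intro M hM
    have e1 : mpow (mpow M (-1/p)) (p/2) = mpow M (-1/2) := by
      rw [mpow_mpow hM, show (-1/p) * (p/2) = (-1/2 : ℝ) by field_simp]
    have e2 : mpow (mpow M (1/q)) q = M := by
      rw [mpow_mpow hM, show (1/q) * q = (1 : ℝ) by field_simp, mpow_one_exp hM]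
    rw [e1, e2]
    have e3 : mpow M (-1/2) * M * mpow M (-1/2) = 1 := by
      have t1 : mpow M (-1/2) * M = mpow M (1/2) := by
        have h' := mpow_mul_mpow hM (-1/2) 1
        rw [mpow_one_exp hM] at h'
        rw [h']
        norm_num
      rw [t1, mpow_mul_mpow hM, show (1/2 + -1/2 : ℝ) = 0 by ring, mpow_zero_exp hM]
    rw [e3, mpow_one_base, lambdaMax_one]
  -- apply midpoint convexity
  have mem₁ : ((P₁, Q₁) : Matrix n n ℂ × Matrix n n ℂ) ∈
      {AB : Matrix n n ℂ × Matrix n n ℂ | AB.1.PosDef ∧ AB.2.PosDef} :=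
    ⟨mpow_posDef hA _, mpow_posDef hA _⟩
  have mem₂ : ((P₂, Q₂) : Matrix n n ℂ × Matrix n n ℂ) ∈
      {AB : Matrix n n ℂ × Matrix n n ℂ | AB.1.PosDef ∧ AB.2.PosDef} :=
    ⟨mpow_posDef hB _, mpow_posDef hB _⟩
  have hconv := h.2 mem₁ mem₂ (by norm_num : (0:ℝ) ≤ 1/2) (by norm_num : (0:ℝ) ≤ 1/2)
    (by norm_num : (1/2 : ℝ) + 1/2 = 1)
  have hpair : (1/2 : ℝ) • ((P₁, Q₁) : Matrix n n ℂ × Matrix n n ℂ)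
      + (1/2 : ℝ) • ((P₂, Q₂) : Matrix n n ℂ × Matrix n n ℂ) = (C, D) := by
    rw [hCdef, hDdef, smul_add, smul_add]
    rfl
  rw [hpair] at hconv
  simp only at hconv
  rw [hval A hA, hval B hB] at hconv
  norm_num at hconv
  exact key_step hC hD hs hconv
end
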